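/- If a simple graph G on n vertices satisfies ω(G) = n/(n − \bar{\bar d}(G)), then G is regular of degree n(ω(G)−1)/ω(G) and G is a complete ω(G)-partite graph (complete multipartite with equal parts). -/

import Mathlib

open Finset

/-- A δ-set in a graph: every vertex in the set has degree at most `n - |S|`. -/
def IsDeltaSet {V : Type*} [Fintype V] (G : SimpleGraph V) [DecidableRel G.Adj]
    (S : Finset V) : Prop :=
  ∀ v ∈ S, G.degree v ≤ Fintype.card V - S.card

/-- The generalized chromatic number: the least `r` such that the vertex set
partitions into `r` δ-sets. -/
noncomputable def genChrom {V : Type*} [Fintype V] [DecidableEq V]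
    (G : SimpleGraph V) [DecidableRel G.Adj] : ℕ :=
  sInf {r | ∃ f : V → Fin r, ∀ i, IsDeltaSet G (Finset.univ.filter fun v => f v = i)}

/-- Quadratic mean of the degree sequence. -/
noncomputable def qmDeg {V : Type*} [Fintype V] (G : SimpleGraph V) [DecidableRel G.Adj] : ℝ :=
  Real.sqrt ((∑ v, (G.degree v : ℝ) ^ 2) / Fintype.card V)

/-- `k`-th elementary symmetric polynomial of `x : Fin r → ℝ`. -/
def esym {r : ℕ} (k : ℕ) (x : Fin r → ℝ) : ℝ :=
  ∑ t ∈ Finset.univ.powersetCard k, ∏ i ∈ t, x i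

private lemma sum_biUnion_le_aux {ι α : Type*} [DecidableEq α] (s : Finset ι) (t : ι → Finset α)
    (f : α → ℝ) (hf : ∀ x, 0 ≤ f x) :
    ∑ x ∈ s.biUnion t, f x ≤ ∑ i ∈ s, ∑ x ∈ t i, f x := by
  classical
  induction s using Finset.induction_on with
  | empty => simp
  | @insert a s ha ih =>
    rw [Finset.biUnion_insert, Finset.sum_insert ha]
    have h1 : ∑ x ∈ t a ∪ s.biUnion t, f x ≤ (∑ x ∈ t a, f x) + ∑ x ∈ s.biUnion t, f x := by
      have h2 := Finset.sum_union_inter (s₁ := t a) (s₂ := s.biUnion t) (f := f)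
      have h3 : 0 ≤ ∑ x ∈ t a ∩ s.biUnion t, f x := Finset.sum_nonneg fun x _ => hf x
      linarith
    exact h1.trans (by linarith)

private lemma count_mod_eq {n r s c : ℕ} (hn : n = r * s) (hc : c < r) :
    #(Finset.univ.filter fun b : Fin n => (b : ℕ) % r = c) = s := by
  have hr : 0 < r := by omega
  have h1 : ∀ b : Fin n, (b : ℕ) / r < s := fun b => by
    have hb := b.2
    rw [Nat.div_lt_iff_lt_mul hr]
    calc (b : ℕ) < n := hb
      _ = s * r := by rw [hn]; ring
  have h2 : ∀ k : Fin s, c + r * (k : ℕ) < n := fun k => by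
    calc c + r * (k : ℕ) < r + r * (k : ℕ) := by omega
      _ = r * ((k : ℕ) + 1) := by ring
      _ ≤ r * s := Nat.mul_le_mul_left r k.2
      _ = n := hn.symm
  rw [show s = #(Finset.univ : Finset (Fin s)) by simp]
  refine Finset.card_bij' (fun b _ => (⟨(b : ℕ) / r, h1 b⟩ : Fin s))
    (fun k _ => (⟨c + r * (k : ℕ), h2 k⟩ : Fin n)) (fun a _ => Finset.mem_univ _)
    (fun k _ => ?_) (fun b hb => ?_) (fun k _ => ?_)
  · simp only [Finset.mem_filter, Finset.mem_univ, true_and]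
    simp [Nat.add_mul_mod_self_left, Nat.mod_eq_of_lt hc]
  · simp only [Finset.mem_filter, Finset.mem_univ, true_and] at hb
    apply Fin.ext
    simp only
    conv_rhs => rw [← Nat.mod_add_div (b : ℕ) r]
    rw [hb]
  · apply Fin.ext
    simp only
    rw [Nat.add_mul_div_left _ _ hr, Nat.div_eq_of_lt hc, Nat.zero_add]

private lemma exists_delta_partition {V : Type*} [Fintype V] [DecidableEq V]
    (G : SimpleGraph V) [DecidableRel G.Adj] :
    ∀ (k : ℕ) (R : Finset V), (∀ s ⊆ R, ¬ G.IsNClique (k + 1) s) →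
      ∃ P : ℕ → Finset V,
        (∀ v ∈ R, ∃ i < k, v ∈ P i) ∧
        (∑ i ∈ Finset.range k, #(P i)) = #R ∧
        (∀ i < k, ∀ v ∈ P i, G.degree v + #(P i) ≤ Fintype.card V) := by
  intro k
  induction k with
  | zero =>
    intro R hR
    have hRe : R = ∅ := by
      by_contra h
      obtain ⟨v, hv⟩ := Finset.nonempty_iff_ne_empty.mpr h
      exact hR {v} (by simpa using hv) (SimpleGraph.isNClique_singleton.mpr rfl)
    refine ⟨fun _ => ∅, by simp [hRe], by simp [hRe], by simp⟩
  | succ k ih =>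
    intro R hR
    rcases R.eq_empty_or_nonempty with rfl | hRne
    · exact ⟨fun _ => ∅, by simp, by simp, by simp⟩
    obtain ⟨x, hxR, hxmax⟩ := Finset.exists_max_image R (fun v => G.degree v) hRne
    have hR'h : ∀ s ⊆ R ∩ G.neighborFinset x, ¬ G.IsNClique (k + 1) s := by
      intro s hs hclique
      have hadj : ∀ b ∈ s, G.Adj x b := by
        intro b hb
        exact (SimpleGraph.mem_neighborFinset _ _ _).1 (Finset.mem_inter.1 (hs hb)).2
      refine hR (insert x s) ?_ (hclique.insert hadj)
      intro y hy
      rcases Finset.mem_insert.1 hy with rfl | hy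
      · exact hxR
      · exact (Finset.mem_inter.1 (hs hy)).1
    obtain ⟨P, hcov, hsum, hδ⟩ := ih (R ∩ G.neighborFinset x) hR'h
    refine ⟨fun i => match i with
      | 0 => R \ G.neighborFinset x
      | j + 1 => P j, ?_, ?_, ?_⟩
    · intro v hv
      by_cases hvn : v ∈ G.neighborFinset x
      · obtain ⟨i, hik, hiP⟩ := hcov v (Finset.mem_inter.2 ⟨hv, hvn⟩)
        exact ⟨i + 1, by omega, hiP⟩
      · exact ⟨0, by omega, Finset.mem_sdiff.2 ⟨hv, hvn⟩⟩
    · rw [Finset.sum_range_succ']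
      show (∑ i ∈ Finset.range k, #(P i)) + #(R \ G.neighborFinset x) = #R
      rw [hsum, add_comm, Finset.card_sdiff_add_card_inter]
    · intro i hik v hv
      match i with
      | 0 =>
        have hv' : v ∈ R \ G.neighborFinset x := hv
        show G.degree v + #(R \ G.neighborFinset x) ≤ Fintype.card V
        have hvR : v ∈ R := (Finset.mem_sdiff.1 hv').1
        have hd : G.degree v ≤ G.degree x := hxmax v hvR
        have hsub : R \ G.neighborFinset x ⊆ Finset.univ \ G.neighborFinset x :=
          Finset.sdiff_subset_sdiff (Finset.subset_univ R) le_rfl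
        have hcard : #(R \ G.neighborFinset x) ≤ Fintype.card V - G.degree x := by
          calc #(R \ G.neighborFinset x) ≤ #(Finset.univ \ G.neighborFinset x) :=
              Finset.card_le_card hsub
            _ = Fintype.card V - G.degree x := by
              rw [Finset.card_sdiff_of_subset (Finset.subset_univ _), Finset.card_univ]
              rfl
        have hdx : G.degree x ≤ Fintype.card V := (G.degree_lt_card_verts x).le
        omega
      | j + 1 =>
        exact hδ j (by omega) v hv

set_option maxHeartbeats 1000000 in
theorem stmt12 {V : Type*} [Fintype V] [DecidableEq V] (G : SimpleGraph V) [DecidableRel G.Adj]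
    (hn : 0 < Fintype.card V)
    (heq : (G.cliqueNum : ℝ) = (Fintype.card V : ℝ) / ((Fintype.card V : ℝ) - qmDeg G)) :
    G.IsRegularOfDegree (Fintype.card V * (G.cliqueNum - 1) / G.cliqueNum) ∧
      ∃ f : V → Fin G.cliqueNum,
        (∀ u v, G.Adj u v ↔ f u ≠ f v) ∧
        ∀ i, (Finset.univ.filter fun v => f v = i).card =
          Fintype.card V / G.cliqueNum := by
  classical
  set n := Fintype.card V with hn_def
  set ω := G.cliqueNum with hω_def
  have hn0 : (0:ℝ) < n := by exact_mod_cast hn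
  -- basic facts about qmDeg
  have hq0 : 0 ≤ qmDeg G := Real.sqrt_nonneg _
  have hq2 : (qmDeg G) ^ 2 = (∑ v, (G.degree v : ℝ) ^ 2) / n := by
    rw [qmDeg, Real.sq_sqrt]
    positivity
  have hsumsq : ∑ v, (G.degree v : ℝ) ^ 2 = n * (qmDeg G) ^ 2 := by
    rw [hq2]; field_simp
  have hdle : ∀ v, (G.degree v : ℝ) ≤ (n : ℝ) - 1 := by
    intro v
    have := G.degree_lt_card_verts v
    have : G.degree v ≤ n - 1 := by omega
    have h2 : ((G.degree v : ℕ) : ℝ) ≤ ((n - 1 : ℕ) : ℝ) := by exact_mod_cast this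
    calc (G.degree v : ℝ) ≤ ((n - 1 : ℕ) : ℝ) := h2
      _ ≤ (n : ℝ) - 1 := by
        have : (1:ℕ) ≤ n := hn
        push_cast [Nat.cast_sub this]
        linarith
  have hqlt : qmDeg G < n := by
    have hsq : (qmDeg G) ^ 2 ≤ ((n:ℝ) - 1) ^ 2 := by
      rw [hq2]
      rw [div_le_iff₀ hn0]
      calc ∑ v, (G.degree v : ℝ) ^ 2 ≤ ∑ _v : V, ((n:ℝ) - 1) ^ 2 := by
            apply Finset.sum_le_sum
            intro v _
            have h1 : (0:ℝ) ≤ (G.degree v : ℝ) := by positivity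
            nlinarith [hdle v]
        _ = n * ((n:ℝ)-1)^2 := by rw [Finset.sum_const, Finset.card_univ]; push_cast; ring
        _ = ((n:ℝ)-1)^2 * n := by ring
    by_contra hcon
    push_neg at hcon
    have hn1 : (1:ℝ) ≤ n := by exact_mod_cast hn
    have hmul : (n:ℝ) * (n:ℝ) ≤ qmDeg G * qmDeg G := mul_le_mul hcon hcon hn0.le hq0
    nlinarith
  have hden : (0:ℝ) < (n:ℝ) - qmDeg G := by linarith
  have hωn : (ω : ℝ) * ((n:ℝ) - qmDeg G) = n := by
    rw [heq, div_mul_cancel₀]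
    exact hden.ne'
  have hω0 : ω ≠ 0 := by
    intro h
    rw [h] at hωn
    push_cast at hωn
    linarith
  have hω0' : 0 < ω := Nat.pos_of_ne_zero hω0
  -- clique-freeness
  have hCF : G.CliqueFree (ω + 1) := by
    intro t ht
    have h1 := SimpleGraph.IsClique.card_le_cliqueNum (tc := ht.isClique)
    rw [ht.card_eq] at h1
    omega
  by_cases hω1 : ω = 1
  · -- trivial case : empty graph
    have hbot : G = ⊥ := by
      apply SimpleGraph.cliqueFree_two.mp
      rw [show (2:ℕ) = ω + 1 by omega]
      exact hCF
    have hdeg : ∀ v, G.degree v = 0 := by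
      intro v
      rw [← SimpleGraph.card_neighborFinset_eq_degree]
      apply Finset.card_eq_zero.mpr
      apply Finset.eq_empty_of_forall_notMem
      intro w hw
      rw [SimpleGraph.mem_neighborFinset, hbot] at hw
      exact hw
    constructor
    · intro v
      rw [hdeg v, hω1]
      simp
    · refine ⟨fun _ => ⟨0, by omega⟩, ?_, ?_⟩
      · intro u v
        constructor
        · intro h
          rw [hbot] at h
          exact absurd h (by simp)
        · intro h
          exact absurd rfl h
      · intro i
        have hi : i = ⟨0, by omega⟩ := by
          apply Fin.ext
          have := i.2
          omega
        rw [Finset.filter_true_of_mem (fun x _ => by rw [hi]), Finset.card_univ, hω1,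
          Nat.div_one]
  · have hω2 : 2 ≤ ω := by omega
    set t : ℝ := (n : ℝ) / ω with ht_def
    have hωt : (ω : ℝ) * t = n := by
      rw [ht_def]
      field_simp
    have ht0 : 0 < t := by
      rw [ht_def]
      positivity
    have h2t : 2 * t ≤ n := by
      have hω2' : (2:ℝ) ≤ (ω:ℝ) := by exact_mod_cast hω2
      nlinarith
    have hq : qmDeg G = (n:ℝ) - t := by
      have : (ω:ℝ) * ((n:ℝ) - qmDeg G) = (ω:ℝ) * t := by rw [hωn, hωt]
      have hωR : (ω:ℝ) ≠ 0 := by exact_mod_cast hω0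
      have := mul_left_cancel₀ hωR this
      linarith
    have htotal : ∑ v, (G.degree v : ℝ) ^ 2 = n * ((n:ℝ) - t) ^ 2 := by
      rw [hsumsq, hq]
    -- get the partition
    obtain ⟨P, hcov, hsum, hδ⟩ := exists_delta_partition G ω Finset.univ
      (fun s _ h => hCF s h)
    have hsum' : ∑ i ∈ Finset.range ω, #(P i) = n := by
      rw [hsum, Finset.card_univ]
    have haleN : ∀ i, #(P i) ≤ n := fun i => Finset.card_le_univ (P i)
    -- real versions
    have hvert : ∀ i ∈ Finset.range ω, ∀ v ∈ P i, (G.degree v : ℝ) ≤ (n:ℝ) - #(P i) := by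
      intro i hi v hv
      have := hδ i (Finset.mem_range.1 hi) v hv
      have hc : ((G.degree v + #(P i) : ℕ) : ℝ) ≤ (n : ℝ) := by exact_mod_cast this
      push_cast at hc
      linarith
    have h2 : ∀ i ∈ Finset.range ω,
        ∑ v ∈ P i, (G.degree v : ℝ) ^ 2 ≤ (#(P i) : ℝ) * ((n:ℝ) - #(P i)) ^ 2 := by
      intro i hi
      calc ∑ v ∈ P i, (G.degree v : ℝ) ^ 2 ≤ ∑ _v ∈ P i, ((n:ℝ) - #(P i)) ^ 2 := by
            apply Finset.sum_le_sum
            intro v hv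
            have h1 : (0:ℝ) ≤ (G.degree v : ℝ) := by positivity
            nlinarith [hvert i hi v hv]
        _ = (#(P i) : ℝ) * ((n:ℝ) - #(P i)) ^ 2 := by
            rw [Finset.sum_const, nsmul_eq_mul]
    set c : ℝ := (n:ℝ)^2 - 4*(n:ℝ)*t + 3*t^2 with hc_def
    have hkey : ∀ s : ℝ, t*((n:ℝ)-t)^2 + c*(s-t) - s*((n:ℝ)-s)^2 = (s-t)^2*(2*(n:ℝ)-2*t-s) := by
      intro s
      rw [hc_def]
      ring
    have h3 : ∀ i ∈ Finset.range ω,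
        (#(P i) : ℝ) * ((n:ℝ) - #(P i)) ^ 2 ≤ t*((n:ℝ)-t)^2 + c*((#(P i):ℝ)-t) := by
      intro i hi
      have hs_le : (#(P i) : ℝ) ≤ n := by exact_mod_cast haleN i
      have hnonneg : 0 ≤ ((#(P i):ℝ)-t)^2*(2*(n:ℝ)-2*t-(#(P i):ℝ)) := by
        apply mul_nonneg (sq_nonneg _)
        linarith
      have := hkey (#(P i) : ℝ)
      linarith
    have hZsum : ∑ i ∈ Finset.range ω, (t*((n:ℝ)-t)^2 + c*((#(P i):ℝ)-t)) = n * ((n:ℝ)-t)^2 := by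
      rw [Finset.sum_add_distrib, Finset.sum_const, Finset.card_range, nsmul_eq_mul]
      have hsc : ∑ i ∈ Finset.range ω, ((#(P i):ℝ) - t) = 0 := by
        rw [Finset.sum_sub_distrib, Finset.sum_const, Finset.card_range, nsmul_eq_mul, hωt]
        have hsumR : ∑ i ∈ Finset.range ω, (#(P i) : ℝ) = (n : ℝ) := by
          exact_mod_cast hsum'
        rw [hsumR]
        ring
      rw [← Finset.mul_sum, hsc, mul_zero, add_zero, ← mul_assoc, hωt]
    have h1 : ∑ v, (G.degree v : ℝ) ^ 2 ≤
        ∑ i ∈ Finset.range ω, ∑ v ∈ P i, (G.degree v : ℝ) ^ 2 := by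
      have hsub : (Finset.univ : Finset V) ⊆ (Finset.range ω).biUnion P := by
        intro v _
        obtain ⟨i, hik, hiP⟩ := hcov v (Finset.mem_univ v)
        exact Finset.mem_biUnion.2 ⟨i, Finset.mem_range.2 hik, hiP⟩
      calc ∑ v, (G.degree v : ℝ) ^ 2 ≤ ∑ v ∈ (Finset.range ω).biUnion P, (G.degree v : ℝ) ^ 2 :=
            Finset.sum_le_sum_of_subset_of_nonneg hsub (fun v _ _ => by positivity)
        _ ≤ _ := sum_biUnion_le_aux _ _ _ (fun v => by positivity)
    -- equality chain
    have hA := Finset.sum_le_sum h2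
    have hB := Finset.sum_le_sum h3
    have hXA : ∑ i ∈ Finset.range ω, ∑ v ∈ P i, (G.degree v : ℝ) ^ 2 =
        ∑ i ∈ Finset.range ω, (#(P i) : ℝ) * ((n:ℝ) - #(P i)) ^ 2 := by
      apply le_antisymm hA
      rw [hZsum] at hB
      rw [htotal] at h1
      linarith
    have hYB : ∑ i ∈ Finset.range ω, (#(P i) : ℝ) * ((n:ℝ) - #(P i)) ^ 2 =
        ∑ i ∈ Finset.range ω, (t*((n:ℝ)-t)^2 + c*((#(P i):ℝ)-t)) := by
      apply le_antisymm hB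
      rw [hZsum, ← hXA]
      rw [htotal] at h1
      linarith
    have hXeq := (Finset.sum_eq_sum_iff_of_le h2).1 hXA
    have hYeq := (Finset.sum_eq_sum_iff_of_le h3).1 hYB
    -- all parts have size t
    have hprod : ∀ i ∈ Finset.range ω, ((#(P i):ℝ)-t)^2*(2*(n:ℝ)-2*t-(#(P i):ℝ)) = 0 := by
      intro i hi
      have := hYeq i hi
      have hk := hkey (#(P i) : ℝ)
      linarith
    have hall : ∀ i ∈ Finset.range ω, (#(P i) : ℝ) = t := by
      intro i hi
      by_contra hne
      rcases mul_eq_zero.1 (hprod i hi) with h | h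
      · have hz : (#(P i):ℝ) - t = 0 := by
          exact pow_eq_zero_iff (by norm_num) |>.mp h
        exact hne (by linarith)
      · -- #(P i) = 2n - 2t ≥ n, so #(P i) = n and the rest are 0
        have hs_le : (#(P i) : ℝ) ≤ n := by exact_mod_cast haleN i
        have hsn : (#(P i) : ℝ) = n := by linarith
        have hain : #(P i) = n := by exact_mod_cast hsn
        -- find another index j with #(P j) = 0
        have hsplit : #(P i) + ∑ j ∈ (Finset.range ω).erase i, #(P j) = n :=
          (Finset.add_sum_erase (Finset.range ω) (fun j => #(P j)) hi).trans hsum'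
        have hrest : ∑ j ∈ (Finset.range ω).erase i, #(P j) = 0 := by omega
        have hjex : ∃ j ∈ (Finset.range ω).erase i, True := by
          have hcard : #((Finset.range ω).erase i) = ω - 1 := by
            rw [Finset.card_erase_of_mem hi, Finset.card_range]
          have : 0 < #((Finset.range ω).erase i) := by omega
          obtain ⟨j, hj⟩ := Finset.card_pos.1 this
          exact ⟨j, hj, trivial⟩
        obtain ⟨j, hj, -⟩ := hjex
        have hj0 : #(P j) = 0 := by
          have := Finset.sum_eq_zero_iff.1 hrest j hj
          exact this
        have hjrange : j ∈ Finset.range ω := Finset.mem_erase.1 hj |>.2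
        have hpj := hprod j hjrange
        rw [hj0] at hpj
        push_cast at hpj
        have heq2 : ((0:ℝ) - t)^2 * (2*(n:ℝ) - 2*t - 0) = t^2 * (2*(n:ℝ) - 2*t) := by ring
        rw [heq2] at hpj
        have h2nt : (0:ℝ) < 2*(n:ℝ) - 2*t := by linarith
        have ht2 : (0:ℝ) < t^2 := by positivity
        have := mul_pos ht2 h2nt
        linarith
    have hωs : ∀ i ∈ Finset.range ω, ω * #(P i) = n := by
      intro i hi
      have h1 : ((ω * #(P i) : ℕ) : ℝ) = (n : ℝ) := by
        push_cast
        rw [hall i hi, hωt]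
      exact_mod_cast h1
    have h0r : (0:ℕ) ∈ Finset.range ω := Finset.mem_range.2 hω0'
    set s0 := #(P 0) with hs0_def
    have hns : n = ω * s0 := (hωs 0 h0r).symm
    have hs0t : (s0 : ℝ) = t := hall 0 h0r
    -- regularity
    have hdeg : ∀ v, G.degree v = n - s0 := by
      intro v
      obtain ⟨i, hik, hiP⟩ := hcov v (Finset.mem_univ v)
      have hir : i ∈ Finset.range ω := Finset.mem_range.2 hik
      have hXi := hXeq i hir
      have hle : ∀ w ∈ P i, (G.degree w : ℝ) ^ 2 ≤ ((n:ℝ) - #(P i)) ^ 2 := by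
        intro w hw
        have h1 : (0:ℝ) ≤ (G.degree w : ℝ) := by positivity
        nlinarith [hvert i hir w hw]
      have hXi' : ∑ w ∈ P i, (G.degree w : ℝ) ^ 2 = ∑ _w ∈ P i, ((n:ℝ) - #(P i)) ^ 2 := by
        rw [hXi, Finset.sum_const, nsmul_eq_mul]
      have hveq := (Finset.sum_eq_sum_iff_of_le hle).1 hXi' v hiP
      have hs_le : (#(P i) : ℝ) ≤ n := by exact_mod_cast haleN i
      have hd0 : (0:ℝ) ≤ (G.degree v : ℝ) := by positivity
      have hdv : (G.degree v : ℝ) = (n:ℝ) - #(P i) := by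
        have hfac : ((G.degree v : ℝ) - ((n:ℝ) - #(P i))) * ((G.degree v : ℝ) + ((n:ℝ) - #(P i))) = 0 := by
          linear_combination hveq
        rcases mul_eq_zero.1 hfac with h | h
        · linarith
        · linarith
      have : (G.degree v : ℝ) = (n:ℝ) - s0 := by
        rw [hdv, hall i hir, ← hs0t]
      have hsn : s0 ≤ n := haleN 0
      have : (G.degree v : ℝ) = ((n - s0 : ℕ) : ℝ) := by
        rw [this, Nat.cast_sub hsn]
      exact_mod_cast this
    have hreg_val : n * (ω - 1) / ω = n - s0 := by
      have e1 : n * (ω - 1) = ω * (s0 * (ω - 1)) := by rw [hns]; ring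
      rw [e1, Nat.mul_div_cancel_left _ hω0']
      have e2 : s0 * (ω - 1) + s0 = ω * s0 := by
        have hsub : ω - 1 + 1 = ω := by omega
        calc s0 * (ω - 1) + s0 = s0 * ((ω - 1) + 1) := by ring
          _ = s0 * ω := by rw [hsub]
          _ = ω * s0 := by ring
      omega
    constructor
    · intro v
      rw [hreg_val]
      exact hdeg v
    -- complete multipartite structure via Turán's theorem
    · have hE : 2 * #G.edgeFinset = n * (n - s0) := by
        rw [← SimpleGraph.sum_degrees_eq_twice_card_edges]
        rw [Finset.sum_congr rfl (fun v _ => hdeg v), Finset.sum_const, Finset.card_univ,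
          smul_eq_mul]
      -- degrees in the Turán graph
      have hTdeg : ∀ b : Fin n, (SimpleGraph.turanGraph n ω).degree b = n - s0 := by
        intro b
        have hbmod : (b : ℕ) % ω < ω := Nat.mod_lt _ hω0'
        rw [← SimpleGraph.card_neighborFinset_eq_degree, SimpleGraph.neighborFinset_eq_filter]
        have hcount : #(Finset.univ.filter fun x : Fin n => (x : ℕ) % ω = (b : ℕ) % ω) = s0 :=
          count_mod_eq hns hbmod
        have hsplit := Finset.card_filter_add_card_filter_not
          (s := (Finset.univ : Finset (Fin n))) (p := fun x : Fin n => (x : ℕ) % ω = (b : ℕ) % ω)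
        rw [Finset.card_univ, Fintype.card_fin] at hsplit
        have hfeq : (Finset.univ.filter fun x : Fin n => (SimpleGraph.turanGraph n ω).Adj b x) =
            (Finset.univ.filter fun x : Fin n => ¬((x : ℕ) % ω = (b : ℕ) % ω)) := by
          apply Finset.filter_congr
          intro x _
          constructor
          · intro h h2
            exact h (h2.symm)
          · intro h h2
            exact h (h2.symm)
        rw [hfeq]
        omega
      have hTE : 2 * #(SimpleGraph.turanGraph n ω).edgeFinset = n * (n - s0) := by
        rw [← SimpleGraph.sum_degrees_eq_twice_card_edges]
        rw [Finset.sum_congr rfl (fun b _ => hTdeg b), Finset.sum_const, Finset.card_univ,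
          Fintype.card_fin, smul_eq_mul]
      -- transport Turán maximality to V
      have hcardV : Fintype.card V = n := rfl
      let ε : V ≃ Fin n := Fintype.equivFin V
      let T' : SimpleGraph V := (SimpleGraph.turanGraph n ω).comap ε.toEmbedding
      haveI : DecidableRel T'.Adj := Classical.decRel _
      have isoT : T' ≃g SimpleGraph.turanGraph n ω := SimpleGraph.Iso.comap ε _
      have hT'max : T'.IsTuranMaximal ω :=
        (SimpleGraph.isTuranMaximal_turanGraph hω0').iso isoT.symm hω0'
      have hT'E : #T'.edgeFinset = #(SimpleGraph.turanGraph n ω).edgeFinset :=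
        isoT.card_edgeFinset_eq
      have hGmax : G.IsTuranMaximal ω := by
        refine ⟨hCF, fun H _ hH => ?_⟩
        have h1 := hT'max.2 hH
        omega
      obtain ⟨φ⟩ := hGmax.nonempty_iso_turanGraph
      refine ⟨fun v => ⟨(φ v : ℕ) % ω, Nat.mod_lt _ hω0'⟩, ?_, ?_⟩
      · intro u v
        rw [← φ.map_rel_iff]
        show ((φ u : ℕ) % ω ≠ (φ v : ℕ) % ω) ↔ _
        rw [ne_eq, ne_eq, ← Fin.val_inj]
      · intro i
        have hi : (i : ℕ) < ω := i.2
        have hcount : #(Finset.univ.filter fun b : Fin n => (b : ℕ) % ω = (i : ℕ)) = s0 :=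
          count_mod_eq hns hi
        have hbij : #(Finset.univ.filter fun v : V => (⟨(φ v : ℕ) % ω, Nat.mod_lt _ hω0'⟩ : Fin ω) = i) =
            #(Finset.univ.filter fun b : Fin n => (b : ℕ) % ω = (i : ℕ)) := by
          apply Finset.card_nbij' (fun v => φ v) (fun b => φ.symm b)
          · intro v hv
            simp only [Finset.coe_filter, Set.mem_setOf_eq, Finset.mem_filter, Finset.mem_univ, true_and] at hv ⊢
            rw [← hv]
          · intro b hb
            simp only [Finset.coe_filter, Set.mem_setOf_eq, Finset.mem_filter, Finset.mem_univ, true_and] at hb ⊢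
            apply Fin.ext
            simp only
            rw [show (φ (φ.symm b) : Fin n) = b from by simp]
            exact hb
          · intro v _
            simp
          · intro b _
            simp
        rw [hbij, hcount, hns, Nat.mul_div_cancel_left _ hω0']
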